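/- Let α be a cyclically-interval t-coloring of a graph G, and let P = (x₀, e₁, x₁, ..., x_{k−1}, e_k, x_k) be a simple path with k ≥ 2. Then at least one of the two open cyclic arcs between α(e₁) and α(e_k) is entirely contained in α[⋃_{i=1}^{k−1} J_G(x_i)]; i.e., either intcyc₁((α(e₁), α(e_k)), t) ⊆ α[⋃_{i=1}^{k−1} J_G(x_i)] or intcyc₂((α(e₁), α(e_k)), t) ⊆ α[⋃_{i=1}^{k−1} J_G(x_i)]. -/

import Mathlib

open SimpleGraph

/-- `Q` is a `t`-cyclic interval. -/
def IsCyclicInterval (t : ℕ) (Q : Set ℕ) : Prop :=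
  ∃ i₁ ∈ Set.Icc 1 t, ∃ i₂ ∈ Set.Icc 1 t,
    Q = Set.Icc (min i₁ i₂) (max i₁ i₂) ∨
    Q = Set.Icc 1 t \ (Set.Icc (min i₁ i₂) (max i₁ i₂) \ {i₁, i₂})

/-- A proper edge `t`-coloring: colors in `[1,t]`, adjacent edges differ, all colors used. -/
def IsProperEdgeColoring {V : Type*} (G : SimpleGraph V) (t : ℕ) (φ : Sym2 V → ℕ) : Prop :=
  (∀ e ∈ G.edgeSet, φ e ∈ Set.Icc 1 t) ∧
  (∀ e₁ ∈ G.edgeSet, ∀ e₂ ∈ G.edgeSet, e₁ ≠ e₂ → (∃ x, x ∈ e₁ ∧ x ∈ e₂) → φ e₁ ≠ φ e₂) ∧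
  (∀ c ∈ Set.Icc 1 t, ∃ e ∈ G.edgeSet, φ e = c)

/-- A cyclically-interval `t`-coloring. -/
def IsCyclicIntervalColoring {V : Type*} (G : SimpleGraph V) (t : ℕ) (φ : Sym2 V → ℕ) : Prop :=
  IsProperEdgeColoring G t φ ∧
  ∀ x : V, (G.incidenceSet x).Nonempty → IsCyclicInterval t (φ '' G.incidenceSet x)

/-- An interval `t`-coloring. -/
def IsIntervalColoring {V : Type*} (G : SimpleGraph V) (t : ℕ) (φ : Sym2 V → ℕ) : Prop :=
  IsProperEdgeColoring G t φ ∧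
  ∀ x : V, (G.incidenceSet x).Nonempty → ∃ a b, φ '' G.incidenceSet x = Set.Icc a b

/-- `TP(u,v)` along a path `p`. -/
def pathTP {V : Type*} (G : SimpleGraph V) {u v : V} (p : G.Walk u v) : Set (Sym2 V) :=
  if p.length ≤ 1 then {e | e ∈ p.edges}
  else ⋃ x ∈ {w | w ∈ p.support ∧ w ≠ u ∧ w ≠ v}, G.incidenceSet x

/-- `M(H)`: maximum of `|TP(b_i,b_j)|` over pairs of vertices. -/
noncomputable def treeM {V : Type*} (G : SimpleGraph V) : ℕ :=
  sSup {n | ∃ (u v : V) (p : G.Walk u v), p.IsPath ∧ (pathTP G p).ncard = n}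

noncomputable def Wcyc {V : Type*} (G : SimpleGraph V) : ℕ :=
  sSup {t | ∃ φ, IsCyclicIntervalColoring G t φ}

noncomputable def wcyc {V : Type*} (G : SimpleGraph V) : ℕ :=
  sInf {t | ∃ φ, IsCyclicIntervalColoring G t φ}

noncomputable def Wint {V : Type*} (G : SimpleGraph V) : ℕ :=
  sSup {t | ∃ φ, IsIntervalColoring G t φ}

noncomputable def wint {V : Type*} (G : SimpleGraph V) : ℕ :=
  sInf {t | ∃ φ, IsIntervalColoring G t φ}

/-- Chromatic index: least `n` admitting a proper edge coloring with colors in `[1,n]`. -/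
noncomputable def chromIndex {V : Type*} (G : SimpleGraph V) : ℕ :=
  sInf {n | ∃ φ : Sym2 V → ℕ, (∀ e ∈ G.edgeSet, φ e ∈ Set.Icc 1 n) ∧
    (∀ e₁ ∈ G.edgeSet, ∀ e₂ ∈ G.edgeSet, e₁ ≠ e₂ → (∃ x, x ∈ e₁ ∧ x ∈ e₂) → φ e₁ ≠ φ e₂)}



lemma key_arc {t : ℕ} {Q : Set ℕ} (hQ : IsCyclicInterval t Q) {u v x y : ℕ}
    (hu : u ∈ Set.Icc 1 t) (hv : v ∈ Set.Icc 1 t) (hu' : u ∉ Q) (hv' : v ∉ Q)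
    (hx : x ∈ Q) (hy : y ∈ Q) :
    (min u v < x ∧ x < max u v ↔ min u v < y ∧ y < max u v) := by
  obtain ⟨i₁, hi₁, i₂, hi₂, hQ | hQ⟩ := hQ <;> subst hQ <;>
    simp only [Set.mem_Icc, Set.mem_diff, Set.mem_insert_iff, Set.mem_singleton_iff,
      not_and, not_or, not_not, not_le] at hu hv hu' hv' hx hy hi₁ hi₂ <;> omega

lemma chain_arc {V : Type*} {G : SimpleGraph V} {t : ℕ} {φ : Sym2 V → ℕ}
    (hφ : IsCyclicIntervalColoring G t φ) {u v : ℕ}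
    (hu : u ∈ Set.Icc 1 t) (hv : v ∈ Set.Icc 1 t) :
    ∀ {x y : V} (p : G.Walk x y), p.IsPath →
      (∀ w ∈ p.support, w ≠ x → w ≠ y →
        u ∉ φ '' G.incidenceSet w ∧ v ∉ φ '' G.incidenceSet w) →
      ∀ e f, p.edges.head? = some e → p.edges.getLast? = some f →
      (min u v < φ e ∧ φ e < max u v ↔ min u v < φ f ∧ φ f < max u v) := by
  intro x y p
  induction p with
  | nil => intro _ _ e f he _; simp at he
  | @cons x x₁ y h q ih =>
    cases q with
    | nil =>
      intro hp hint e f he hf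
      simp [SimpleGraph.Walk.edges_cons] at he hf
      rw [← he, ← hf]
    | @cons _ x₂ _ h' r =>
      intro hp hint e f he hf
      have hq : (SimpleGraph.Walk.cons h' r).IsPath := hp.of_cons
      have hxnot : x ∉ (SimpleGraph.Walk.cons h' r).support :=
        ((SimpleGraph.Walk.cons_isPath_iff _ _).mp hp).2
      -- x₁ is internal
      have hx₁y : x₁ ≠ y := by
        have hnd := hq.support_nodup
        rw [SimpleGraph.Walk.support_cons, List.nodup_cons] at hnd
        intro hxy
        exact hnd.1 (hxy ▸ r.end_mem_support)
      have hx₁x : x₁ ≠ x := h.ne'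
      have hx₁mem : x₁ ∈ (SimpleGraph.Walk.cons h (SimpleGraph.Walk.cons h' r)).support := by
        simp [SimpleGraph.Walk.support_cons]
      obtain ⟨huJ, hvJ⟩ := hint x₁ hx₁mem hx₁x hx₁y
      -- the two edges at x₁
      have hinc1 : s(x, x₁) ∈ G.incidenceSet x₁ := ⟨h, Sym2.mem_mk_right x x₁⟩
      have hinc2 : s(x₁, x₂) ∈ G.incidenceSet x₁ := ⟨h', Sym2.mem_mk_left x₁ x₂⟩
      have hcyc : IsCyclicInterval t (φ '' G.incidenceSet x₁) :=
        hφ.2 x₁ ⟨_, hinc1⟩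
      have hstep := key_arc hcyc hu hv huJ hvJ
        (Set.mem_image_of_mem φ hinc1) (Set.mem_image_of_mem φ hinc2)
      -- recursive part
      have hint' : ∀ w ∈ (SimpleGraph.Walk.cons h' r).support, w ≠ x₁ → w ≠ y →
          u ∉ φ '' G.incidenceSet w ∧ v ∉ φ '' G.incidenceSet w := by
        intro w hw _ hwy
        refine hint w ?_ ?_ hwy
        · rw [SimpleGraph.Walk.support_cons]; exact List.mem_cons_of_mem _ hw
        · rintro rfl; exact hxnot hw
      have hhead : (SimpleGraph.Walk.cons h' r).edges.head? = some s(x₁, x₂) := by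
        simp [SimpleGraph.Walk.edges_cons]
      have hlast : (SimpleGraph.Walk.cons h' r).edges.getLast? = some f := by
        rw [SimpleGraph.Walk.edges_cons, SimpleGraph.Walk.edges_cons] at hf
        rw [SimpleGraph.Walk.edges_cons]
        rwa [List.getLast?_cons_cons] at hf
      have hrec := ih hq hint' s(x₁, x₂) f hhead hlast
      have he' : e = s(x, x₁) := by
        simp [SimpleGraph.Walk.edges_cons] at he; exact he.symm
      rw [he'] at *
      exact hstep.trans hrec

/-- Lemma 3: at least one of the two open cyclic arcs between the colors of the first and last
edge of a simple path is contained in the colors incident to its internal vertices. -/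
theorem stmt2 {V : Type*} (G : SimpleGraph V) (t : ℕ) (φ : Sym2 V → ℕ)
    (hφ : IsCyclicIntervalColoring G t φ) {x₀ xₖ : V} (p : G.Walk x₀ xₖ)
    (hp : p.IsPath) (hk : 2 ≤ p.length) (e₁ eₖ : Sym2 V)
    (he₁ : p.edges.head? = some e₁) (heₖ : p.edges.getLast? = some eₖ) :
    Set.Icc (min (φ e₁) (φ eₖ)) (max (φ e₁) (φ eₖ)) \ {φ e₁, φ eₖ} ⊆
      φ '' ⋃ x ∈ {w | w ∈ p.support ∧ w ≠ x₀ ∧ w ≠ xₖ}, G.incidenceSet x ∨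
    Set.Icc 1 t \ Set.Icc (min (φ e₁) (φ eₖ)) (max (φ e₁) (φ eₖ)) ⊆
      φ '' ⋃ x ∈ {w | w ∈ p.support ∧ w ≠ x₀ ∧ w ≠ xₖ}, G.incidenceSet x := by
  by_contra hcon
  push_neg at hcon
  obtain ⟨h1, h2⟩ := hcon
  rw [Set.not_subset] at h1 h2
  obtain ⟨u, huA, huS⟩ := h1
  obtain ⟨v, hvB, hvS⟩ := h2
  have he₁mem : e₁ ∈ p.edges := by
    cases hpe : p.edges with
    | nil => rw [hpe] at he₁; simp at he₁
    | cons a l =>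
      rw [hpe] at he₁; simp at he₁; rw [← he₁]; exact List.mem_cons_self
  have heₖmem : eₖ ∈ p.edges := by
    obtain ⟨hne, heq⟩ := List.mem_getLast?_eq_getLast (show eₖ ∈ p.edges.getLast? from heₖ ▸ rfl)
    rw [heq]; exact List.getLast_mem hne
  have hc₁ : φ e₁ ∈ Set.Icc 1 t := hφ.1.1 e₁ (p.edges_subset_edgeSet he₁mem)
  have hcₖ : φ eₖ ∈ Set.Icc 1 t := hφ.1.1 eₖ (p.edges_subset_edgeSet heₖmem)
  have hint : ∀ w ∈ p.support, w ≠ x₀ → w ≠ xₖ →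
      u ∉ φ '' G.incidenceSet w ∧ v ∉ φ '' G.incidenceSet w := by
    intro w hw hw0 hwk
    have hsub : φ '' G.incidenceSet w ⊆
        φ '' ⋃ x ∈ {w | w ∈ p.support ∧ w ≠ x₀ ∧ w ≠ xₖ}, G.incidenceSet x :=
      Set.image_mono (f := φ) (Set.subset_biUnion_of_mem ⟨hw, hw0, hwk⟩)
    exact ⟨fun hmem => huS (hsub hmem), fun hmem => hvS (hsub hmem)⟩
  have hu : u ∈ Set.Icc 1 t := by
    simp only [Set.mem_diff, Set.mem_Icc, Set.mem_insert_iff, Set.mem_singleton_iff,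
      not_or] at huA hc₁ hcₖ ⊢
    omega
  have hv : v ∈ Set.Icc 1 t := hvB.1
  have hsame := chain_arc hφ hu hv p hp hint e₁ eₖ he₁ heₖ
  simp only [Set.mem_diff, Set.mem_Icc, Set.mem_insert_iff, Set.mem_singleton_iff,
    not_or, not_and, not_le] at huA hvB hc₁ hcₖ hsame
  omega
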